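/- Suppose the two components of the spherically symmetric divergence (dilaton) constraint hold on I with E nonvanishing, namely A'/A − (rE)'/(rE) = 2B²/(r(B²+r²S²)) and A'/A + 2ρ'/ρ + (B²+r²S²)'/(B²+r²S²) = −2rS²/(B²+r²S²) on I. Then the function r ↦ r³·ρ(r)²·(B(r)²+r²S(r)²)·E(r) is constant on I. -/

import Mathlib

open Real Filter Topology Set

/-- On an open interval `I = (a,b) ⊆ (0,∞)`, if the two components of the
spherically symmetric divergence (dilaton) constraint hold with `E` nonvanishing, namely
`A'/A − (rE)'/(rE) = 2B²/(r(B²+r²S²))` and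
`A'/A + 2ρ'/ρ + (B²+r²S²)'/(B²+r²S²) = −2rS²/(B²+r²S²)`,
then `r ↦ r³·ρ(r)²·(B(r)²+r²S(r)²)·E(r)` is constant on `I`. -/
theorem dilaton_constraint_first_integral
    (a b : ℝ) (ha : 0 ≤ a)
    (A B ρ E S : ℝ → ℝ)
    (hA : ∀ r ∈ Ioo a b, DifferentiableAt ℝ A r)
    (hB : ∀ r ∈ Ioo a b, DifferentiableAt ℝ B r)
    (hρ : ∀ r ∈ Ioo a b, DifferentiableAt ℝ ρ r)
    (hE : ∀ r ∈ Ioo a b, DifferentiableAt ℝ E r)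
    (hS : ∀ r ∈ Ioo a b, DifferentiableAt ℝ S r)
    (hApos : ∀ r ∈ Ioo a b, 0 < A r)
    (hBpos : ∀ r ∈ Ioo a b, 0 < B r)
    (hρpos : ∀ r ∈ Ioo a b, 0 < ρ r)
    (hEne : ∀ r ∈ Ioo a b, E r ≠ 0)
    (hBS : ∀ r ∈ Ioo a b, 0 < B r ^ 2 + r ^ 2 * S r ^ 2)
    (hconstr1 : ∀ r ∈ Ioo a b,
      deriv A r / A r - deriv (fun s => s * E s) r / (r * E r)
        = 2 * B r ^ 2 / (r * (B r ^ 2 + r ^ 2 * S r ^ 2)))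
    (hconstr2 : ∀ r ∈ Ioo a b,
      deriv A r / A r + 2 * deriv ρ r / ρ r
          + deriv (fun s => B s ^ 2 + s ^ 2 * S s ^ 2) r / (B r ^ 2 + r ^ 2 * S r ^ 2)
        = -(2 * r * S r ^ 2) / (B r ^ 2 + r ^ 2 * S r ^ 2)) :
    ∃ c : ℝ, ∀ r ∈ Ioo a b,
      r ^ 3 * ρ r ^ 2 * (B r ^ 2 + r ^ 2 * S r ^ 2) * E r = c := by
  by_cases hab : a < b
  · have hne : (Ioo a b).Nonempty := nonempty_Ioo.2 hab
    obtain ⟨x0, hx0⟩ := hne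
    set G : ℝ → ℝ := fun s => s ^ 3 * ρ s ^ 2 * (B s ^ 2 + s ^ 2 * S s ^ 2) * E s with hGdef
    have key : ∀ r ∈ Ioo a b, HasDerivAt G 0 r := by
      intro r hr
      have hr0 : 0 < r := lt_of_le_of_lt ha hr.1
      have hrne : r ≠ 0 := hr0.ne'
      have hAne : A r ≠ 0 := (hApos r hr).ne'
      have hρne : ρ r ≠ 0 := (hρpos r hr).ne'
      have hEne' : E r ≠ 0 := hEne r hr
      have hWne : B r ^ 2 + r ^ 2 * S r ^ 2 ≠ 0 := (hBS r hr).ne'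
      have hBd := (hB r hr).hasDerivAt
      have hSd := (hS r hr).hasDerivAt
      have hρd := (hρ r hr).hasDerivAt
      have hEd := (hE r hr).hasDerivAt
      have hWd : HasDerivAt (fun s => B s ^ 2 + s ^ 2 * S s ^ 2)
          (2 * B r * deriv B r + (2 * r * S r ^ 2 + r ^ 2 * (2 * S r * deriv S r))) r := by
        have := (hBd.fun_pow 2).fun_add ((hasDerivAt_pow 2 r).fun_mul (hSd.fun_pow 2))
        simpa [pow_one, mul_comm, mul_assoc, mul_left_comm] using this
      have hREd : HasDerivAt (fun s => s * E s) (E r + r * deriv E r) r := by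
        have := (hasDerivAt_id' (x := r)).fun_mul hEd
        simpa using this
      have eq1 := hconstr1 r hr
      have eq2 := hconstr2 r hr
      rw [hREd.deriv] at eq1
      rw [hWd.deriv] at eq2
      have eq3 : 2 * deriv ρ r / ρ r
          + (2 * B r * deriv B r + (2 * r * S r ^ 2 + r ^ 2 * (2 * S r * deriv S r)))
              / (B r ^ 2 + r ^ 2 * S r ^ 2)
          + (E r + r * deriv E r) / (r * E r)
          = -(2 * r * S r ^ 2) / (B r ^ 2 + r ^ 2 * S r ^ 2)
            - 2 * B r ^ 2 / (r * (B r ^ 2 + r ^ 2 * S r ^ 2)) := by linarith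
      have h3 : HasDerivAt (fun s : ℝ => s ^ 3) (3 * r ^ 2) r := by
        simpa using hasDerivAt_pow 3 r
      have hρ2 : HasDerivAt (fun s => ρ s ^ 2) (2 * ρ r * deriv ρ r) r := by
        simpa [pow_one] using hρd.fun_pow 2
      have hprod := ((h3.fun_mul hρ2).fun_mul hWd).fun_mul hEd
      refine hprod.congr_deriv (Eq.symm ?_)
      field_simp at eq3
      have hw2 : (B r ^ 2 + r ^ 2 * S r ^ 2) ^ 2 ≠ 0 := pow_ne_zero 2 hWne
      apply mul_right_cancel₀ hw2
      linear_combination (-(r ^ 2 * ρ r * (B r ^ 2 + r ^ 2 * S r ^ 2) ^ 2)) * eq3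
    refine ⟨G x0, fun r hr => ?_⟩
    have hdiff : DifferentiableOn ℝ G (Ioo a b) := fun z hz =>
      ((key z hz).differentiableAt).differentiableWithinAt
    have hzero : ∀ z ∈ Ioo a b, fderivWithin ℝ G (Ioo a b) z = 0 := by
      intro z hz
      have := ((key z hz).hasFDerivAt.hasFDerivWithinAt).fderivWithin
        (isOpen_Ioo.uniqueDiffWithinAt hz)
      rw [this]
      ext
      simp
    exact (convex_Ioo a b).is_const_of_fderivWithin_eq_zero hdiff hzero hr hx0
  · refine ⟨0, fun r hr => absurd (hr.1.trans hr.2) (not_lt.2 (le_of_not_gt hab))⟩
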